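/- Let n ≥ 1 and let M : Matrix (Fin n × Fin n) (Fin n × Fin n) ℂ be Hermitian. Then there exists a real multivariate polynomial p in 4n variables (p ∈ MvPolynomial (Fin n ⊕ Fin n ⊕ Fin n ⊕ Fin n) ℝ) that is homogeneous of degree 4, such that: (i) for all a, b, c, d ∈ ℝⁿ, the evaluation of p at (a, b, c, d) equals the real number Σ_{i,j,k,l} M_{(k,l),(i,j)} · conj(x_k · y_l) · x_i · y_j where x_r = a_r + i·b_r and y_s = c_s + i·d_s (this complex number is real since M is Hermitian); and (ii) M is block positive if and only if p evaluates to a nonnegative real number at every point of ℝ^{4n}. -/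

import Mathlib

open Matrix ComplexOrder

noncomputable def reP {σ : Type*} (Q : MvPolynomial σ ℂ) : MvPolynomial σ ℝ :=
  AddMonoidAlgebra.ofCoeff (Finsupp.mapRange Complex.re Complex.zero_re (AddMonoidAlgebra.coeff Q))

theorem coeff_reP {σ : Type*} (Q : MvPolynomial σ ℂ) (d : σ →₀ ℕ) :
    (reP Q).coeff d = (Q.coeff d).re := rfl

theorem reP_add {σ : Type*} (Q R : MvPolynomial σ ℂ) :
    reP (Q + R) = reP Q + reP R := by
  ext d
  simp [coeff_reP]

theorem reP_monomial {σ : Type*} (d : σ →₀ ℕ) (c : ℂ) :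
    reP (MvPolynomial.monomial d c) = MvPolynomial.monomial d c.re := by
  ext m
  classical
  by_cases h : d = m <;> simp [coeff_reP, MvPolynomial.coeff_monomial, h]

theorem reP_homog {σ : Type*} {Q : MvPolynomial σ ℂ} {m : ℕ}
    (h : Q.IsHomogeneous m) : (reP Q).IsHomogeneous m := by
  intro d hd
  exact h (fun h0 => hd (by simp [coeff_reP, h0]))

theorem eval_reP {σ : Type*} (Q : MvPolynomial σ ℂ) (w : σ → ℝ) :
    MvPolynomial.eval w (reP Q) = (MvPolynomial.eval (fun s => (w s : ℂ)) Q).re := by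
  induction Q using MvPolynomial.induction_on' with
  | monomial d c =>
      rw [reP_monomial, MvPolynomial.eval_monomial, MvPolynomial.eval_monomial]
      have hp : (Finsupp.prod d fun s e => ((w s : ℂ)) ^ e)
          = ((Finsupp.prod d fun s e => (w s) ^ e : ℝ) : ℂ) := by
        rw [Finsupp.prod, Finsupp.prod]
        push_cast
        rfl
      rw [hp, Complex.mul_re]
      simp
  | add p q hp hq =>
      rw [reP_add, map_add, map_add, Complex.add_re, hp, hq]

theorem sum4_comm {β : Type*} [AddCommMonoid β] {n : ℕ}
    (f : Fin n → Fin n → Fin n → Fin n → β) :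
    (∑ a : Fin n, ∑ b : Fin n, ∑ c : Fin n, ∑ d : Fin n, f a b c d)
      = ∑ c : Fin n, ∑ d : Fin n, ∑ a : Fin n, ∑ b : Fin n, f a b c d := by
  calc (∑ a : Fin n, ∑ b : Fin n, ∑ c : Fin n, ∑ d : Fin n, f a b c d)
      = ∑ a : Fin n, ∑ c : Fin n, ∑ b : Fin n, ∑ d : Fin n, f a b c d :=
        Finset.sum_congr rfl fun a _ => Finset.sum_comm
    _ = ∑ c : Fin n, ∑ a : Fin n, ∑ b : Fin n, ∑ d : Fin n, f a b c d := Finset.sum_comm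
    _ = ∑ c : Fin n, ∑ a : Fin n, ∑ d : Fin n, ∑ b : Fin n, f a b c d :=
        Finset.sum_congr rfl fun c _ => Finset.sum_congr rfl fun a _ => Finset.sum_comm
    _ = ∑ c : Fin n, ∑ d : Fin n, ∑ a : Fin n, ∑ b : Fin n, f a b c d :=
        Finset.sum_congr rfl fun c _ => Finset.sum_comm


/-- For a Hermitian matrix `M` indexed by `Fin n × Fin n`, there exists a
real multivariate polynomial `p` in `4n` variables, homogeneous of degree 4, such that
(i) for all `a b c d : ℝⁿ`, the evaluation of `p` at `(a,b,c,d)` equals (after coercion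
to `ℂ`) the number `Σ_{i,j,k,l} M_{(k,l),(i,j)} · conj(x_k·y_l) · x_i · y_j` where
`x_r = a_r + i·b_r` and `y_s = c_s + i·d_s`, and (ii) `M` is block positive if and only
if `p` is nonnegative at every point of `ℝ^{4n}`. -/
theorem exists_positivity_polynomial (n : ℕ) (hn : 1 ≤ n)
    (M : Matrix (Fin n × Fin n) (Fin n × Fin n) ℂ) (hM : M.IsHermitian) :
    ∃ p : MvPolynomial (Fin n ⊕ Fin n ⊕ Fin n ⊕ Fin n) ℝ,
      p.IsHomogeneous 4 ∧
      (∀ a b c d : Fin n → ℝ,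
        ((MvPolynomial.eval (Sum.elim a (Sum.elim b (Sum.elim c d))) p : ℝ) : ℂ)
          = ∑ i : Fin n, ∑ j : Fin n, ∑ k : Fin n, ∑ l : Fin n,
              M (k, l) (i, j) *
                (starRingEnd ℂ) (((a k : ℂ) + (b k : ℂ) * Complex.I) *
                  ((c l : ℂ) + (d l : ℂ) * Complex.I)) *
                ((a i : ℂ) + (b i : ℂ) * Complex.I) *
                ((c j : ℂ) + (d j : ℂ) * Complex.I)) ∧
      ((∀ x y : Fin n → ℂ,
          0 ≤ ∑ k : Fin n, ∑ l : Fin n, ∑ i : Fin n, ∑ j : Fin n,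
            (starRingEnd ℂ) (x k * y l) * M (k, l) (i, j) * x i * y j) ↔
        (∀ v : (Fin n ⊕ Fin n ⊕ Fin n ⊕ Fin n) → ℝ,
          0 ≤ MvPolynomial.eval v p)) := by
  classical
  set σ := (Fin n ⊕ Fin n ⊕ Fin n ⊕ Fin n)
  set Q : MvPolynomial σ ℂ :=
    ∑ i : Fin n, ∑ j : Fin n, ∑ k : Fin n, ∑ l : Fin n,
      MvPolynomial.C (M (k,l) (i,j)) *
        ((MvPolynomial.X (Sum.inl k) - MvPolynomial.C Complex.I * MvPolynomial.X (Sum.inr (Sum.inl k))) *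
         (MvPolynomial.X (Sum.inr (Sum.inr (Sum.inl l))) - MvPolynomial.C Complex.I * MvPolynomial.X (Sum.inr (Sum.inr (Sum.inr l))))) *
        (MvPolynomial.X (Sum.inl i) + MvPolynomial.C Complex.I * MvPolynomial.X (Sum.inr (Sum.inl i))) *
        (MvPolynomial.X (Sum.inr (Sum.inr (Sum.inl j))) + MvPolynomial.C Complex.I * MvPolynomial.X (Sum.inr (Sum.inr (Sum.inr j)))) with hQdef
  -- generic T form
  have hST : ∀ x y : Fin n → ℂ,
      (∑ k : Fin n, ∑ l : Fin n, ∑ i : Fin n, ∑ j : Fin n,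
        (starRingEnd ℂ) (x k * y l) * M (k, l) (i, j) * x i * y j)
      = ∑ i : Fin n, ∑ j : Fin n, ∑ k : Fin n, ∑ l : Fin n,
        M (k, l) (i, j) * (starRingEnd ℂ) (x k * y l) * x i * y j := by
    intro x y
    rw [sum4_comm]
    exact Finset.sum_congr rfl fun i _ => Finset.sum_congr rfl fun j _ =>
      Finset.sum_congr rfl fun k _ => Finset.sum_congr rfl fun l _ => by ring
  -- realness of T
  have hM' : ∀ p q, (starRingEnd ℂ) (M p q) = M q p := by
    intro p q
    conv_rhs => rw [← hM]
    simp [Matrix.conjTranspose_apply]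
  have key : ∀ x y : Fin n → ℂ,
      (starRingEnd ℂ) (∑ i : Fin n, ∑ j : Fin n, ∑ k : Fin n, ∑ l : Fin n,
        M (k, l) (i, j) * (starRingEnd ℂ) (x k * y l) * x i * y j)
      = ∑ i : Fin n, ∑ j : Fin n, ∑ k : Fin n, ∑ l : Fin n,
        M (k, l) (i, j) * (starRingEnd ℂ) (x k * y l) * x i * y j := by
    intro x y
    simp only [map_sum, _root_.map_mul, Complex.conj_conj, hM']
    rw [sum4_comm (fun a b c d => M (a,b) (c,d) * (x c * y d) * (starRingEnd ℂ) (x a) * (starRingEnd ℂ) (y b))]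
    exact Finset.sum_congr rfl fun i _ => Finset.sum_congr rfl fun j _ =>
      Finset.sum_congr rfl fun k _ => Finset.sum_congr rfl fun l _ => by ring
  -- evaluation of Q
  have hQeval : ∀ a b c d : Fin n → ℝ,
      MvPolynomial.eval (fun s => ((Sum.elim a (Sum.elim b (Sum.elim c d)) s : ℝ) : ℂ)) Q
      = ∑ i : Fin n, ∑ j : Fin n, ∑ k : Fin n, ∑ l : Fin n,
          M (k, l) (i, j) *
            (starRingEnd ℂ) (((a k : ℂ) + (b k : ℂ) * Complex.I) *
              ((c l : ℂ) + (d l : ℂ) * Complex.I)) *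
            ((a i : ℂ) + (b i : ℂ) * Complex.I) *
            ((c j : ℂ) + (d j : ℂ) * Complex.I) := by
    intro a b c d
    rw [hQdef]
    simp only [map_sum, _root_.map_mul, map_add, map_sub, MvPolynomial.eval_C, MvPolynomial.eval_X,
      Sum.elim_inl, Sum.elim_inr]
    refine Finset.sum_congr rfl fun i _ => Finset.sum_congr rfl fun j _ =>
      Finset.sum_congr rfl fun k _ => Finset.sum_congr rfl fun l _ => ?_
    simp only [_root_.map_mul, map_add, Complex.conj_ofReal, Complex.conj_I]
    ring
  -- condition (i)
  have h_i : ∀ a b c d : Fin n → ℝ,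
      ((MvPolynomial.eval (Sum.elim a (Sum.elim b (Sum.elim c d))) (reP Q) : ℝ) : ℂ)
      = ∑ i : Fin n, ∑ j : Fin n, ∑ k : Fin n, ∑ l : Fin n,
          M (k, l) (i, j) *
            (starRingEnd ℂ) (((a k : ℂ) + (b k : ℂ) * Complex.I) *
              ((c l : ℂ) + (d l : ℂ) * Complex.I)) *
            ((a i : ℂ) + (b i : ℂ) * Complex.I) *
            ((c j : ℂ) + (d j : ℂ) * Complex.I) := by
    intro a b c d
    rw [eval_reP, hQeval a b c d]
    exact Complex.conj_eq_iff_re.mp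
      (key (fun k => (a k : ℂ) + (b k : ℂ) * Complex.I)
           (fun l => (c l : ℂ) + (d l : ℂ) * Complex.I))
  refine ⟨reP Q, ?_, h_i, ?_⟩
  · -- homogeneity
    apply reP_homog
    rw [hQdef]
    apply MvPolynomial.IsHomogeneous.sum; intro i _
    apply MvPolynomial.IsHomogeneous.sum; intro j _
    apply MvPolynomial.IsHomogeneous.sum; intro k _
    apply MvPolynomial.IsHomogeneous.sum; intro l _
    have hX : ∀ s : σ, (MvPolynomial.X s : MvPolynomial σ ℂ).IsHomogeneous 1 :=
      fun s => MvPolynomial.isHomogeneous_X _ _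
    have hC : ∀ c : ℂ, (MvPolynomial.C c : MvPolynomial σ ℂ).IsHomogeneous 0 :=
      fun c => MvPolynomial.isHomogeneous_C _ _
    have hsub : ∀ s t : σ,
        ((MvPolynomial.X s : MvPolynomial σ ℂ) - MvPolynomial.C Complex.I * MvPolynomial.X t).IsHomogeneous 1 :=
      fun s t => (hX s).sub ((hC Complex.I).mul (hX t))
    have hadd : ∀ s t : σ,
        ((MvPolynomial.X s : MvPolynomial σ ℂ) + MvPolynomial.C Complex.I * MvPolynomial.X t).IsHomogeneous 1 :=
      fun s t => (hX s).add ((hC Complex.I).mul (hX t))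
    exact (((hC _).mul ((hsub _ _).mul (hsub _ _))).mul (hadd _ _)).mul (hadd _ _)
  · -- condition (ii)
    constructor
    · intro h v
      set a := fun k : Fin n => v (Sum.inl k) with ha
      set b := fun k : Fin n => v (Sum.inr (Sum.inl k)) with hb
      set c := fun k : Fin n => v (Sum.inr (Sum.inr (Sum.inl k))) with hc
      set d := fun k : Fin n => v (Sum.inr (Sum.inr (Sum.inr k))) with hd
      have hv : v = Sum.elim a (Sum.elim b (Sum.elim c d)) := by
        funext s
        rcases s with s | s | s | s <;> rfl
      rw [hv]
      have h0 := h (fun k => (a k : ℂ) + (b k : ℂ) * Complex.I)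
                   (fun l => (c l : ℂ) + (d l : ℂ) * Complex.I)
      rw [hST] at h0
      rw [← h_i a b c d] at h0
      exact_mod_cast h0
    · intro h x y
      set a := fun k : Fin n => (x k).re with ha
      set b := fun k : Fin n => (x k).im with hb
      set c := fun k : Fin n => (y k).re with hc
      set d := fun k : Fin n => (y k).im with hd
      have hx : ∀ k, x k = (a k : ℂ) + (b k : ℂ) * Complex.I :=
        fun k => (Complex.re_add_im (x k)).symm
      have hy : ∀ k, y k = (c k : ℂ) + (d k : ℂ) * Complex.I :=
        fun k => (Complex.re_add_im (y k)).symm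
      rw [hST]
      have := h (Sum.elim a (Sum.elim b (Sum.elim c d)))
      have h2 : (0:ℂ) ≤ ((MvPolynomial.eval (Sum.elim a (Sum.elim b (Sum.elim c d))) (reP Q) : ℝ) : ℂ) := by
        exact_mod_cast this
      rw [h_i a b c d] at h2
      convert h2 using 1
      refine Finset.sum_congr rfl fun i _ => Finset.sum_congr rfl fun j _ =>
        Finset.sum_congr rfl fun k _ => Finset.sum_congr rfl fun l _ => ?_
      rw [hx i, hx k, hy j, hy l]
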